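/- For n ≥ 1 set m_n = c^n_{x_{2^{n−1}−1}, x_{2^{n−1}}} (conductance between the middle bottom-row point of V_n and its left neighbor, for the set E_n⁺ computed at level n) and l_n = c^n_{x₀,x₁}. Then m_n = c^n_{x_{2^{n−1}}, x_{2^{n−1}+1}}, m_1 = 20/9, and for every n ≥ 1: m_{n+1} = (5/3)·l_n + 294·25^{n+1} / ((3^{n+1} + 6·10^{n+1})·(5·3^{n+1} + 9·10^{n+1})). -/
import Mathlib


open scoped BigOperators

noncomputable section

namespace SGPaper

/-- The three corners of the Sierpinski gasket:
`q₀ = (1/2, √3/2)`, `q₁ = (0,0)`, `q₂ = (1,0)`. -/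
def q : Fin 3 → ℝ × ℝ
  | 0 => (1 / 2, Real.sqrt 3 / 2)
  | 1 => (0, 0)
  | 2 => (1, 0)

/-- The contraction map towards corner `i`: `F_i(x) = (x + q_i)/2`. -/
def Fmap (i : Fin 3) (x : ℝ × ℝ) : ℝ × ℝ := (2⁻¹ : ℝ) • (x + q i)

/-- `Fword w = F_{w₁} ∘ ⋯ ∘ F_{w_m}` for the word `w = w₁⋯w_m`. -/
def Fword (w : List (Fin 3)) : ℝ × ℝ → ℝ × ℝ :=
  w.foldr (fun i f => Fmap i ∘ f) id

/-- The level-`m` vertex set of the Sierpinski gasket: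
`V_m = ⋃_{|w| = m} F_w({q₀, q₁, q₂})`. -/
def V (m : ℕ) : Set (ℝ × ℝ) :=
  {x | ∃ w : List (Fin 3), w.length = m ∧ ∃ i : Fin 3, x = Fword w (q i)}

/-- `x` and `y` are `m`-neighbors: they are distinct and belong to a common
level-`m` cell `F_w({q₀, q₁, q₂})`. -/
def Nbr (m : ℕ) (x y : ℝ × ℝ) : Prop :=
  x ≠ y ∧ ∃ w : List (Fin 3), w.length = m ∧
    (∃ i : Fin 3, x = Fword w (q i)) ∧ (∃ j : Fin 3, y = Fword w (q j))

/-- The value `(u x - u y)²` on the unordered pair `{x, y}`. -/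
def edgeVal (u : ℝ × ℝ → ℝ) : Sym2 (ℝ × ℝ) → ℝ :=
  Sym2.lift ⟨fun x y => (u x - u y) ^ 2, fun _ _ => by ring⟩

/-- The unordered pair `e` is an edge of the level-`m` graph `Γ_m`. -/
def IsEdge (m : ℕ) (e : Sym2 (ℝ × ℝ)) : Prop :=
  ∃ x y : ℝ × ℝ, Nbr m x y ∧ e = s(x, y)

/-- The level-`m` graph energy: `E_m(u) = (5/3)^m Σ (u x − u y)²`, the sum being over
unordered `m`-neighbor pairs `{x, y}` (a finite set, so `tsum` is the honest sum). -/
def Energy (m : ℕ) (u : ℝ × ℝ → ℝ) : ℝ :=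
  (5 / 3 : ℝ) ^ m * ∑' e : {e : Sym2 (ℝ × ℝ) // IsEdge m e}, edgeVal u e

/-- `Q_E(v)`: minimal level-`m` energy among functions `u : V_m → ℝ` agreeing
with `v` on `E` (the minimum is attained, so it equals this infimum). -/
def Q (m : ℕ) (E : Set (ℝ × ℝ)) (v : ℝ × ℝ → ℝ) : ℝ :=
  sInf {r | ∃ u : ℝ × ℝ → ℝ, (∀ x ∈ E, u x = v x) ∧ r = Energy m u}

/-- Indicator function of the point `z`. -/
def ind (z : ℝ × ℝ) : ℝ × ℝ → ℝ := fun t => if t = z then 1 else 0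

/-- The conductance `c^E_{x,y} = (Q_E(𝟙_x) + Q_E(𝟙_y) − Q_E(𝟙_x + 𝟙_y))/2`
between `x, y ∈ E`, computed at level `m`. -/
def cond (m : ℕ) (E : Set (ℝ × ℝ)) (x y : ℝ × ℝ) : ℝ :=
  (Q m E (ind x) + Q m E (ind y) - Q m E (ind x + ind y)) / 2

/-- The `j`-th bottom-row point of `V_n`: `x_j = q₁ + (j/2ⁿ)(q₂ − q₁)`. -/
def xb (n j : ℕ) : ℝ × ℝ := q 1 + ((j : ℝ) / 2 ^ n) • (q 2 - q 1)

/-- The bottom row `Ẽ_n = {x₀, …, x_{2ⁿ}}` of `V_n`. -/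
def Ebot (n : ℕ) : Set (ℝ × ℝ) := {p | ∃ j ≤ 2 ^ n, p = xb n j}

/-- The bottom row together with the top point: `E_n⁺ = {q₀, x₀, …, x_{2ⁿ}}`. -/
def Eplus (n : ℕ) : Set (ℝ × ℝ) := insert (q 0) (Ebot n)

open scoped Classical













-- ### basic facts
lemma s3_pos : 0 < Real.sqrt 3 := Real.sqrt_pos.2 (by norm_num)
lemma s3_sq : Real.sqrt 3 ^ 2 = 3 := Real.sq_sqrt (by norm_num)

lemma q0_def : q 0 = (1/2, Real.sqrt 3/2) := rfl
lemma q1_def : q 1 = (0, 0) := rfl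
lemma q2_def : q 2 = (1, 0) := rfl

lemma q_ne_01 : q 0 ≠ q 1 := by
  simp only [q0_def, q1_def, Prod.mk.injEq, ne_eq, not_and]
  intro _ h; exact absurd h (by nlinarith [s3_pos])
lemma q_ne_02 : q 0 ≠ q 2 := by
  simp only [q0_def, q2_def, Prod.mk.injEq, ne_eq, not_and]
  intro h; norm_num at h
lemma q_ne_12 : q 1 ≠ q 2 := by
  simp only [q1_def, q2_def, Prod.mk.injEq, ne_eq, not_and]
  intro h; norm_num at h

lemma Fmap_def (i : Fin 3) (z : ℝ × ℝ) :
    Fmap i z = ((z.1 + (q i).1)/2, (z.2 + (q i).2)/2) := by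
  simp [Fmap, Prod.ext_iff]; constructor <;> ring

lemma Fmap_inj (i : Fin 3) : Function.Injective (Fmap i) := by
  intro a b h
  rw [Fmap_def, Fmap_def, Prod.mk.injEq] at h
  exact Prod.ext (by linarith [h.1]) (by linarith [h.2])

lemma Fword_nil : Fword [] = id := rfl
lemma Fword_cons (i : Fin 3) (w : List (Fin 3)) : Fword (i :: w) = Fmap i ∘ Fword w := rfl

lemma mem_V_zero {x : ℝ × ℝ} : x ∈ V 0 ↔ ∃ i : Fin 3, x = q i := by
  constructor
  · rintro ⟨w, hw, i, rfl⟩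
    rw [List.length_eq_zero_iff] at hw
    subst hw; exact ⟨i, rfl⟩
  · rintro ⟨i, rfl⟩; exact ⟨[], rfl, i, rfl⟩

lemma mem_V_succ {m : ℕ} {x : ℝ × ℝ} :
    x ∈ V (m+1) ↔ ∃ i : Fin 3, ∃ y ∈ V m, x = Fmap i y := by
  constructor
  · rintro ⟨w, hw, i, rfl⟩
    rcases w with _ | ⟨a, w'⟩
    · simp at hw
    · simp only [List.length_cons, Nat.succ.injEq] at hw
      exact ⟨a, Fword w' (q i), ⟨w', hw, i, rfl⟩, rfl⟩
  · rintro ⟨i, y, ⟨w, hw, j, rfl⟩, rfl⟩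
    exact ⟨i :: w, by simp [hw], j, rfl⟩

-- ### triangle and separation
def T : Set (ℝ × ℝ) :=
  {z | 0 ≤ z.2 ∧ z.2 ≤ Real.sqrt 3 * z.1 ∧ z.2 ≤ Real.sqrt 3 * (1 - z.1)}

lemma q_mem_T (i : Fin 3) : q i ∈ T := by
  have h3 := s3_pos
  fin_cases i <;> refine ⟨?_, ?_, ?_⟩ <;>
    simp [q, T] <;> nlinarith [s3_pos]

lemma T_x_bounds {z : ℝ × ℝ} (hz : z ∈ T) : 0 ≤ z.1 ∧ z.1 ≤ 1 := by
  obtain ⟨h0, h1, h2⟩ := hz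
  have h3 := s3_pos
  constructor <;> nlinarith

lemma T_y_bound {z : ℝ × ℝ} (hz : z ∈ T) : z.2 ≤ Real.sqrt 3 / 2 := by
  obtain ⟨h0, h1, h2⟩ := hz; nlinarith

lemma Fmap_mem_T {z : ℝ × ℝ} (i : Fin 3) (hz : z ∈ T) : Fmap i z ∈ T := by
  obtain ⟨h0, h1, h2⟩ := hz
  have h3 := s3_pos
  fin_cases i <;> rw [Fmap_def] <;> refine ⟨?_, ?_, ?_⟩ <;> simp [q] <;> nlinarith

lemma V_subset_T (m : ℕ) : V m ⊆ T := by
  induction m with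
  | zero => rintro x hx; rw [mem_V_zero] at hx; obtain ⟨i, rfl⟩ := hx; exact q_mem_T i
  | succ m ih =>
    rintro x hx; rw [mem_V_succ] at hx
    obtain ⟨i, y, hy, rfl⟩ := hx
    exact Fmap_mem_T i (ih hy)

lemma sep01 {a b : ℝ × ℝ} (ha : a ∈ T) (hb : b ∈ T) (h : Fmap 0 a = Fmap 1 b) :
    a = q 1 ∧ b = q 0 := by
  have h3 := s3_pos
  rw [Fmap_def, Fmap_def, Prod.mk.injEq] at h
  simp only [q, q0_def, q1_def] at h ⊢
  obtain ⟨hx, hy⟩ := h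
  obtain ⟨ha0, ha1, ha2⟩ := ha
  obtain ⟨hb0, hb1, hb2⟩ := hb
  have hb2' : b.2 = Real.sqrt 3 / 2 := by nlinarith
  have ha2' : a.2 = 0 := by nlinarith
  have hb1' : b.1 = 1/2 := by nlinarith
  have ha1' : a.1 = 0 := by nlinarith
  exact ⟨Prod.ext ha1' ha2', Prod.ext hb1' hb2'⟩

lemma sep02 {a b : ℝ × ℝ} (ha : a ∈ T) (hb : b ∈ T) (h : Fmap 0 a = Fmap 2 b) :
    a = q 2 ∧ b = q 0 := by
  have h3 := s3_pos
  rw [Fmap_def, Fmap_def, Prod.mk.injEq] at h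
  simp only [q, q0_def, q2_def] at h ⊢
  obtain ⟨hx, hy⟩ := h
  obtain ⟨ha0, ha1, ha2⟩ := ha
  obtain ⟨hb0, hb1, hb2⟩ := hb
  have hb2' : b.2 = Real.sqrt 3 / 2 := by nlinarith
  have ha2' : a.2 = 0 := by nlinarith
  have hb1' : b.1 = 1/2 := by nlinarith
  have ha1' : a.1 = 1 := by nlinarith
  exact ⟨Prod.ext ha1' ha2', Prod.ext hb1' hb2'⟩

lemma sep12 {a b : ℝ × ℝ} (ha : a ∈ T) (hb : b ∈ T) (h : Fmap 1 a = Fmap 2 b) :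
    a = q 2 ∧ b = q 1 := by
  have h3 := s3_pos
  rw [Fmap_def, Fmap_def, Prod.mk.injEq] at h
  simp only [q, q1_def, q2_def] at h ⊢
  obtain ⟨hx, hy⟩ := h
  obtain ⟨ha0, ha1, ha2⟩ := ha
  obtain ⟨hb0, hb1, hb2⟩ := hb
  have hbx := (T_x_bounds ⟨hb0, hb1, hb2⟩).1
  have hax := (T_x_bounds ⟨ha0, ha1, ha2⟩).2
  have ha1' : a.1 = 1 := by linarith
  have hb1' : b.1 = 0 := by linarith
  have ha2' : a.2 = 0 := by nlinarith
  have hb2' : b.2 = 0 := by linarith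
  exact ⟨Prod.ext ha1' ha2', Prod.ext hb1' hb2'⟩

-- ### edge structure
lemma isEdge_zero {e : Sym2 (ℝ × ℝ)} :
    IsEdge 0 e ↔ e = s(q 0, q 1) ∨ e = s(q 0, q 2) ∨ e = s(q 1, q 2) := by
  constructor
  · rintro ⟨x, y, ⟨hxy, w, hw, ⟨i, rfl⟩, ⟨j, rfl⟩⟩, rfl⟩
    rw [List.length_eq_zero_iff] at hw; subst hw
    simp only [Fword_nil, id] at hxy ⊢
    fin_cases i <;> fin_cases j <;> simp_all <;>
      first
        | (left; rfl) | (right; left; rfl) | (right; right; rfl)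
        | (left; exact Sym2.eq_swap) | (right; left; exact Sym2.eq_swap)
        | (right; right; exact Sym2.eq_swap)
  · intro h
    rcases h with rfl | rfl | rfl
    · exact ⟨q 0, q 1, ⟨q_ne_01, [], rfl, ⟨0, rfl⟩, ⟨1, rfl⟩⟩, rfl⟩
    · exact ⟨q 0, q 2, ⟨q_ne_02, [], rfl, ⟨0, rfl⟩, ⟨2, rfl⟩⟩, rfl⟩
    · exact ⟨q 1, q 2, ⟨q_ne_12, [], rfl, ⟨1, rfl⟩, ⟨2, rfl⟩⟩, rfl⟩

lemma isEdge_succ {m : ℕ} {e : Sym2 (ℝ × ℝ)} :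
    IsEdge (m+1) e ↔ ∃ i : Fin 3, ∃ e' : Sym2 (ℝ × ℝ), IsEdge m e' ∧ e = Sym2.map (Fmap i) e' := by
  constructor
  · rintro ⟨x, y, ⟨hxy, w, hw, ⟨i, rfl⟩, ⟨j, rfl⟩⟩, rfl⟩
    rcases w with _ | ⟨a, w'⟩
    · simp at hw
    · simp only [List.length_cons, Nat.succ.injEq] at hw
      refine ⟨a, s(Fword w' (q i), Fword w' (q j)), ⟨Fword w' (q i), Fword w' (q j),
        ⟨?_, w', hw, ⟨i, rfl⟩, ⟨j, rfl⟩⟩, rfl⟩, ?_⟩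
      · intro hc; exact hxy (by rw [Fword_cons]; simp [hc])
      · simp only [Sym2.map_pair_eq, Sym2.eq_iff]; exact Or.inl ⟨rfl, rfl⟩
  · rintro ⟨i, e', ⟨x, y, ⟨hxy, w, hw, ⟨a, rfl⟩, ⟨b, rfl⟩⟩, rfl⟩, rfl⟩
    refine ⟨Fmap i (Fword w (q a)), Fmap i (Fword w (q b)),
      ⟨fun hc => hxy (Fmap_inj i hc), i :: w, by simp [hw], ⟨a, rfl⟩, ⟨b, rfl⟩⟩, ?_⟩
    simp [Sym2.map_pair_eq]

lemma edge_endpoints_mem_V {m : ℕ} {x y : ℝ × ℝ} (h : Nbr m x y) : x ∈ V m ∧ y ∈ V m := by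
  obtain ⟨_, w, hw, ⟨i, hx⟩, ⟨j, hy⟩⟩ := h
  exact ⟨⟨w, hw, i, hx⟩, ⟨w, hw, j, hy⟩⟩

lemma edgeSet_finite (m : ℕ) : {e : Sym2 (ℝ × ℝ) | IsEdge m e}.Finite := by
  induction m with
  | zero =>
    apply Set.Finite.subset
      (((Set.finite_singleton (s(q 1, q 2))).insert (s(q 0, q 2))).insert (s(q 0, q 1)))
    intro e he
    rcases isEdge_zero.1 he with rfl | rfl | rfl <;> simp
  | succ m ih =>
    have : {e : Sym2 (ℝ × ℝ) | IsEdge (m+1) e} =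
        ⋃ i : Fin 3, (Sym2.map (Fmap i)) '' {e | IsEdge m e} := by
      ext e
      simp only [Set.mem_setOf_eq, Set.mem_iUnion, Set.mem_image, isEdge_succ]
      constructor
      · rintro ⟨i, e', h1, h2⟩; exact ⟨i, e', h1, h2.symm⟩
      · rintro ⟨i, e', h1, h2⟩; exact ⟨i, e', h1, h2.symm⟩
    rw [this]
    exact Set.finite_iUnion fun i => ih.image _

lemma energy_eq_sum (m : ℕ) (u : ℝ × ℝ → ℝ) :
    Energy m u = (5/3 : ℝ)^m * ∑ e ∈ (edgeSet_finite m).toFinset, edgeVal u e := by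
  unfold Energy
  congr 1
  calc ∑' e : {e : Sym2 (ℝ × ℝ) // IsEdge m e}, edgeVal u e
      = ∑' e : Sym2 (ℝ × ℝ), Set.indicator {e | IsEdge m e} (edgeVal u) e :=
        (tsum_subtype _ _)
    _ = ∑ e ∈ (edgeSet_finite m).toFinset, Set.indicator {e | IsEdge m e} (edgeVal u) e := by
        apply tsum_eq_sum
        intro b hb
        exact Set.indicator_of_notMem (by simpa using hb) _
    _ = ∑ e ∈ (edgeSet_finite m).toFinset, edgeVal u e := by
        apply Finset.sum_congr rfl
        intro e he
        exact Set.indicator_of_mem (by simpa using he) _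

lemma edgeVal_map (u : ℝ × ℝ → ℝ) (f : ℝ × ℝ → ℝ × ℝ) (e : Sym2 (ℝ × ℝ)) :
    edgeVal u (Sym2.map f e) = edgeVal (u ∘ f) e := by
  induction e using Sym2.ind with
  | _ x y => simp [Sym2.map_pair_eq, edgeVal]

lemma sep_unique {i j : Fin 3} (hij : i ≠ j) {a b c d : ℝ × ℝ}
    (ha : a ∈ T) (hb : b ∈ T) (hc : c ∈ T) (hd : d ∈ T)
    (h1 : Fmap i a = Fmap j c) (h2 : Fmap i b = Fmap j d) : a = b := by
  fin_cases i <;> fin_cases j <;> first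
    | exact absurd rfl hij
    | (exact ((sep01 ha hc h1).1).trans ((sep01 hb hd h2).1).symm)
    | (exact ((sep02 ha hc h1).1).trans ((sep02 hb hd h2).1).symm)
    | (exact ((sep12 ha hc h1).1).trans ((sep12 hb hd h2).1).symm)
    | (exact ((sep01 hc ha h1.symm).2).trans ((sep01 hd hb h2.symm).2).symm)
    | (exact ((sep02 hc ha h1.symm).2).trans ((sep02 hd hb h2.symm).2).symm)
    | (exact ((sep12 hc ha h1.symm).2).trans ((sep12 hd hb h2.symm).2).symm)

lemma energy_succ (m : ℕ) (u : ℝ × ℝ → ℝ) :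
    Energy (m+1) u =
      (5/3 : ℝ) * (Energy m (u ∘ Fmap 0) + Energy m (u ∘ Fmap 1) + Energy m (u ∘ Fmap 2)) := by
  have hset : (edgeSet_finite (m+1)).toFinset =
      Finset.univ.biUnion (fun i : Fin 3 =>
        (edgeSet_finite m).toFinset.image (Sym2.map (Fmap i))) := by
    ext e
    simp only [Set.Finite.mem_toFinset, Set.mem_setOf_eq, Finset.mem_biUnion, Finset.mem_univ,
      Finset.mem_image, true_and, isEdge_succ]
    constructor
    · rintro ⟨i, e', h1, h2⟩; exact ⟨i, e', by simpa using h1, h2.symm⟩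
    · rintro ⟨i, e', h1, h2⟩; exact ⟨i, e', by simpa using h1, h2.symm⟩
  have hdisj : ∀ i ∈ (Finset.univ : Finset (Fin 3)), ∀ j ∈ Finset.univ, i ≠ j →
      Disjoint ((edgeSet_finite m).toFinset.image (Sym2.map (Fmap i)))
        ((edgeSet_finite m).toFinset.image (Sym2.map (Fmap j))) := by
    intro i _ j _ hij
    rw [Finset.disjoint_left]
    rintro e he1 he2
    simp only [Finset.mem_image, Set.Finite.mem_toFinset, Set.mem_setOf_eq] at he1 he2
    obtain ⟨e1, he1, rfl⟩ := he1
    obtain ⟨e2, he2, heq⟩ := he2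
    obtain ⟨x, y, hnbr, rfl⟩ := he1
    obtain ⟨z, w, hnbr2, rfl⟩ := he2
    rw [Sym2.map_pair_eq, Sym2.map_pair_eq, Sym2.eq_iff] at heq
    have hx := (edge_endpoints_mem_V hnbr).1
    have hy := (edge_endpoints_mem_V hnbr).2
    have hz := (edge_endpoints_mem_V hnbr2).1
    have hw := (edge_endpoints_mem_V hnbr2).2
    have hTx := V_subset_T m hx
    have hTy := V_subset_T m hy
    have hTz := V_subset_T m hz
    have hTw := V_subset_T m hw
    rcases heq with ⟨h1, h2⟩ | ⟨h1, h2⟩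
    · exact hnbr.1 (sep_unique hij hTx hTy hTz hTw h1.symm h2.symm)
    · exact hnbr.1 (sep_unique hij hTx hTy hTw hTz h2.symm h1.symm)
  rw [energy_eq_sum, hset, Finset.sum_biUnion hdisj]
  have himg : ∀ i : Fin 3,
      ∑ e ∈ (edgeSet_finite m).toFinset.image (Sym2.map (Fmap i)), edgeVal u e
        = ∑ e ∈ (edgeSet_finite m).toFinset, edgeVal (u ∘ Fmap i) e := by
    intro i
    rw [Finset.sum_image (fun a _ b _ h => Sym2.map.injective (Fmap_inj i) h)]
    exact Finset.sum_congr rfl fun e _ => edgeVal_map u (Fmap i) e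
  rw [Fin.sum_univ_three]
  rw [himg 0, himg 1, himg 2, energy_eq_sum, energy_eq_sum, energy_eq_sum]
  ring

lemma energy_congr {m : ℕ} {u v : ℝ × ℝ → ℝ} (h : ∀ x ∈ V m, u x = v x) :
    Energy m u = Energy m v := by
  rw [energy_eq_sum, energy_eq_sum]
  congr 1
  apply Finset.sum_congr rfl
  intro e he
  simp only [Set.Finite.mem_toFinset, Set.mem_setOf_eq] at he
  obtain ⟨x, y, hnbr, rfl⟩ := he
  have hx := (edge_endpoints_mem_V hnbr).1
  have hy := (edge_endpoints_mem_V hnbr).2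
  simp [edgeVal, h x hx, h y hy]

lemma energy_zero (u : ℝ × ℝ → ℝ) :
    Energy 0 u = (u (q 0) - u (q 1))^2 + (u (q 0) - u (q 2))^2 + (u (q 1) - u (q 2))^2 := by
  rw [energy_eq_sum]
  have h01 : s(q 0, q 1) ≠ s(q 0, q 2) := by
    simp only [ne_eq, Sym2.eq_iff, not_or, not_and]
    exact ⟨fun _ => q_ne_12, fun h => absurd h q_ne_02⟩
  have h02 : s(q 0, q 1) ≠ s(q 1, q 2) := by
    simp only [ne_eq, Sym2.eq_iff, not_or, not_and]
    exact ⟨fun h => absurd h q_ne_01, fun h => absurd h q_ne_02⟩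
  have h12 : s(q 0, q 2) ≠ s(q 1, q 2) := by
    simp only [ne_eq, Sym2.eq_iff, not_or, not_and]
    exact ⟨fun h => absurd h q_ne_01, fun h => absurd h q_ne_02⟩
  have hset : (edgeSet_finite 0).toFinset = {s(q 0, q 1), s(q 0, q 2), s(q 1, q 2)} := by
    ext e
    simp only [Set.Finite.mem_toFinset, Set.mem_setOf_eq, isEdge_zero, Finset.mem_insert,
      Finset.mem_singleton]
  rw [hset]
  rw [Finset.sum_insert (by simp [h01, h02]), Finset.sum_insert (by simp [h12]),
    Finset.sum_singleton]
  simp [edgeVal]; ring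

-- ### special points

lemma xb_def (n j : ℕ) : xb n j = ((j : ℝ)/2^n, 0) := by
  simp [xb, q, Prod.ext_iff]

lemma xb_zero (n : ℕ) : xb n 0 = q 1 := by simp [xb_def, q1_def]

lemma xb_top (n : ℕ) : xb n (2^n) = q 2 := by
  rw [xb_def, q2_def]
  have : ((2:ℝ)^n) ≠ 0 := by positivity
  push_cast
  field_simp

lemma xb_inj {n j k : ℕ} (h : xb n j = xb n k) : j = k := by
  rw [xb_def, xb_def, Prod.mk.injEq] at h
  have h2 : ((2:ℝ)^n) ≠ 0 := by positivity
  have h' := h.1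
  field_simp at h'
  exact_mod_cast h'

lemma Fmap1_xb (n j : ℕ) : Fmap 1 (xb n j) = xb (n+1) j := by
  rw [xb_def, xb_def, Fmap_def, q1_def]
  simp [Prod.ext_iff]
  ring

lemma Fmap2_xb (n j : ℕ) : Fmap 2 (xb n j) = xb (n+1) (j + 2^n) := by
  have h2 : ((2:ℝ)^n) ≠ 0 := by positivity
  rw [xb_def, xb_def, Fmap_def, q2_def]
  have key : ((j + 2^n : ℕ) : ℝ) / 2^(n+1) = ((j:ℝ)/2^n + 1)/2 := by
    have h3 : (j:ℝ)/2^n + 1 = ((j:ℝ) + 2^n)/2^n := by field_simp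
    rw [h3, div_div, ← pow_succ]
    push_cast
    ring_nf
  simp only [Prod.mk.injEq]
  exact ⟨key.symm, by norm_num⟩

lemma Fmap_q_self (i : Fin 3) : Fmap i (q i) = q i := by
  fin_cases i <;> rw [Fmap_def] <;> simp [q] <;> norm_num

lemma q_mem_V (i : Fin 3) (n : ℕ) : q i ∈ V n := by
  induction n with
  | zero => exact mem_V_zero.2 ⟨i, rfl⟩
  | succ n ih => exact mem_V_succ.2 ⟨i, q i, ih, (Fmap_q_self i).symm⟩

lemma xb_mem_V (n : ℕ) : ∀ j ≤ 2^n, xb n j ∈ V n := by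
  induction n with
  | zero =>
    intro j hj
    interval_cases j
    · rw [xb_zero]; exact q_mem_V 1 0
    · rw [show (1:ℕ) = 2^0 by norm_num, xb_top]; exact q_mem_V 2 0
  | succ n ih =>
    intro j hj
    by_cases h : j ≤ 2^n
    · exact mem_V_succ.2 ⟨1, xb n j, ih j h, (Fmap1_xb n j).symm⟩
    · refine mem_V_succ.2 ⟨2, xb n (j - 2^n), ih _ (by omega), ?_⟩
      rw [Fmap2_xb]
      congr 1
      omega

-- glue points
lemma glueL_eq : Fmap 0 (q 1) = Fmap 1 (q 0) := by
  rw [Fmap_def, Fmap_def]; simp [q]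
lemma glueR_eq : Fmap 0 (q 2) = Fmap 2 (q 0) := by
  rw [Fmap_def, Fmap_def]; simp [q]; ring
lemma glueB_eq : Fmap 1 (q 2) = Fmap 2 (q 1) := by
  rw [Fmap_def, Fmap_def]; simp [q]

def Gmap (i : Fin 3) (z : ℝ × ℝ) : ℝ × ℝ := (2 : ℝ) • z - q i

lemma Gmap_Fmap (i : Fin 3) (z : ℝ × ℝ) : Gmap i (Fmap i z) = z := by
  rw [Fmap_def]
  simp [Gmap, Prod.ext_iff]
  constructor <;> ring

-- ### the glued function
def glue (n : ℕ) (uT uL uR : ℝ × ℝ → ℝ) : ℝ × ℝ → ℝ := fun z =>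
  if z ∈ Fmap 1 '' V n then uL (Gmap 1 z)
  else if z ∈ Fmap 2 '' V n then uR (Gmap 2 z)
  else if z ∈ Fmap 0 '' V n then uT (Gmap 0 z)
  else 0

variable {n : ℕ} {uT uL uR : ℝ × ℝ → ℝ}

lemma glue_F1 {y : ℝ × ℝ} (hy : y ∈ V n) : glue n uT uL uR (Fmap 1 y) = uL y := by
  rw [glue, if_pos ⟨y, hy, rfl⟩, Gmap_Fmap]

lemma glue_F2 (hcomp : uL (q 2) = uR (q 1)) {y : ℝ × ℝ} (hy : y ∈ V n) :
    glue n uT uL uR (Fmap 2 y) = uR y := by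
  by_cases h1 : Fmap 2 y ∈ Fmap 1 '' V n
  · obtain ⟨z, hz, hzy⟩ := h1
    obtain ⟨hz2, hy1⟩ := sep12 (V_subset_T n hz) (V_subset_T n hy) hzy
    rw [glue, if_pos ⟨z, hz, hzy⟩, ← hzy, Gmap_Fmap, hz2, hy1, hcomp]
  · rw [glue, if_neg h1, if_pos ⟨y, hy, rfl⟩, Gmap_Fmap]

lemma glue_F0 (hcL : uT (q 1) = uL (q 0)) (hcR : uT (q 2) = uR (q 0))
    {y : ℝ × ℝ} (hy : y ∈ V n) : glue n uT uL uR (Fmap 0 y) = uT y := by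
  by_cases h1 : Fmap 0 y ∈ Fmap 1 '' V n
  · obtain ⟨z, hz, hzy⟩ := h1
    obtain ⟨hy1, hz0⟩ := sep01 (V_subset_T n hy) (V_subset_T n hz) hzy.symm
    rw [glue, if_pos ⟨z, hz, hzy⟩, ← hzy, Gmap_Fmap, hz0, hy1, hcL]
  · by_cases h2 : Fmap 0 y ∈ Fmap 2 '' V n
    · obtain ⟨z, hz, hzy⟩ := h2
      obtain ⟨hy2, hz0⟩ := sep02 (V_subset_T n hy) (V_subset_T n hz) hzy.symm
      rw [glue, if_neg h1, if_pos ⟨z, hz, hzy⟩, ← hzy, Gmap_Fmap, hz0, hy2, hcR]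
    · rw [glue, if_neg h1, if_neg h2, if_pos ⟨y, hy, rfl⟩, Gmap_Fmap]

-- ### pinned definitions





-- ### boundary data and characterization of traces
def Adm (n : ℕ) (s : ℝ) (b : ℕ → ℝ) (u : ℝ × ℝ → ℝ) : Prop :=
  u (q 0) = s ∧ ∀ j ≤ 2^n, u (xb n j) = b j

def IsCharged (n : ℕ) (b : ℕ → ℝ) (α β S : ℝ) : Prop :=
  (∀ s u, Adm n s b u → α - 2*β*s + S*s^2 ≤ Energy n u) ∧
  (∀ s, ∃ u, Adm n s b u ∧ Energy n u = α - 2*β*s + S*s^2)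

lemma IsCharged.congr {n : ℕ} {b b' : ℕ → ℝ} {α β S : ℝ}
    (h : IsCharged n b α β S) (hbb : ∀ j ≤ 2^n, b j = b' j) :
    IsCharged n b' α β S := by
  have hadm : ∀ s u, Adm n s b' u ↔ Adm n s b u := by
    intro s u
    unfold Adm
    constructor
    · rintro ⟨h0, hb⟩
      exact ⟨h0, fun j hj => by rw [hb j hj, hbb j hj]⟩
    · rintro ⟨h0, hb⟩
      exact ⟨h0, fun j hj => by rw [hb j hj, ← hbb j hj]⟩
  constructor
  · intro s u hu; exact h.1 s u ((hadm s u).1 hu)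
  · intro s
    obtain ⟨u, hu, hE⟩ := h.2 s
    exact ⟨u, (hadm s u).2 hu, hE⟩

lemma Q_eq_of_charged {n : ℕ} {b : ℕ → ℝ} {α β S : ℝ} (h : IsCharged n b α β S)
    {v : ℝ × ℝ → ℝ} (hv0 : v (q 0) = 0) (hvb : ∀ j ≤ 2^n, v (xb n j) = b j) :
    Q n (Eplus n) v = α := by
  have hval : α - 2*β*0 + S*0^2 = α := by ring
  have hset : {r | ∃ u : ℝ × ℝ → ℝ, (∀ x ∈ Eplus n, u x = v x) ∧ r = Energy n u}
      = {r | ∃ u, Adm n 0 b u ∧ r = Energy n u} := by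
    ext ρ
    constructor
    · rintro ⟨u, hu, rfl⟩
      refine ⟨u, ⟨?_, ?_⟩, rfl⟩
      · rw [hu (q 0) (Set.mem_insert _ _), hv0]
      · intro j hj
        rw [hu (xb n j) (Set.mem_insert_iff.2 (Or.inr ⟨j, hj, rfl⟩)), hvb j hj]
    · rintro ⟨u, ⟨h0, hb⟩, rfl⟩
      refine ⟨u, ?_, rfl⟩
      rintro x (rfl | ⟨j, hj, rfl⟩)
      · rw [h0, hv0]
      · rw [hb j hj, hvb j hj]
  unfold Q
  rw [hset]
  obtain ⟨u, hu, hE⟩ := h.2 0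
  apply le_antisymm
  · apply csInf_le
    · refine ⟨α, ?_⟩
      rintro ρ ⟨w, hw, rfl⟩
      have := h.1 0 w hw
      rwa [hval] at this
    · exact ⟨u, hu, (hE.trans hval).symm⟩
  · refine le_csInf ⟨Energy n u, u, hu, rfl⟩ ?_
    rintro ρ ⟨w, hw, rfl⟩
    have := h.1 0 w hw
    rwa [hval] at this

-- ### quadratic minimization
lemma quad_lb (S γ δ p r : ℝ) (hS : 0 ≤ S) :
    -((S+2)*(γ^2+δ^2)+2*γ*δ)/((S+1)*(S+3)) ≤ (S+2)*(p^2+r^2) - 2*p*r - 2*γ*p - 2*δ*r := by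
  have h1 : (0:ℝ) < S+1 := by linarith
  have h3 : (0:ℝ) < S+3 := by linarith
  have key : (S+2)*(p^2+r^2) - 2*p*r - 2*γ*p - 2*δ*r
        + ((S+2)*(γ^2+δ^2)+2*γ*δ)/((S+1)*(S+3))
      = ((S+1)*((((S+1)*(S+3))*p - ((S+2)*γ+δ))^2 + (((S+1)*(S+3))*r - ((S+2)*δ+γ))^2)
          + ((((S+1)*(S+3))*p - ((S+2)*γ+δ)) - (((S+1)*(S+3))*r - ((S+2)*δ+γ)))^2)
        / ((S+1)*(S+3))^2 := by
    field_simp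
    ring
  have h0 : 0 ≤ ((S+1)*((((S+1)*(S+3))*p - ((S+2)*γ+δ))^2 + (((S+1)*(S+3))*r - ((S+2)*δ+γ))^2)
          + ((((S+1)*(S+3))*p - ((S+2)*γ+δ)) - (((S+1)*(S+3))*r - ((S+2)*δ+γ)))^2)
        / ((S+1)*(S+3))^2 := by positivity
  have hAB : -((S+2)*(γ^2+δ^2)+2*γ*δ)/((S+1)*(S+3))
      = -(((S+2)*(γ^2+δ^2)+2*γ*δ)/((S+1)*(S+3))) := by ring
  linarith [key, h0, hAB]

-- ### corner trace property
def CTProp (n : ℕ) : Prop := ∀ a p r : ℝ,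
  (∀ u : ℝ × ℝ → ℝ, u (q 0) = a → u (q 1) = p → u (q 2) = r →
    (a-p)^2+(a-r)^2+(p-r)^2 ≤ Energy n u) ∧
  (∃ u : ℝ × ℝ → ℝ, u (q 0) = a ∧ u (q 1) = p ∧ u (q 2) = r ∧
    Energy n u = (a-p)^2+(a-r)^2+(p-r)^2)

lemma ct_zero : CTProp 0 := by
  intro a p r
  have hn1 : q 1 ≠ q 0 := fun h => q_ne_01 h.symm
  have hn2 : q 2 ≠ q 0 := fun h => q_ne_02 h.symm
  have hn3 : q 2 ≠ q 1 := fun h => q_ne_12 h.symm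
  constructor
  · intro u h0 h1 h2
    rw [energy_zero, h0, h1, h2]
  · refine ⟨fun z => if z = q 0 then a else if z = q 1 then p else r, by simp, ?_, ?_, ?_⟩
    · simp [hn1]
    · simp [hn2, hn3]
    · rw [energy_zero]; simp [hn1, hn2, hn3]

lemma ct_succ {n : ℕ} (ih : CTProp n) : CTProp (n+1) := by
  intro a p r
  constructor
  · intro u h0 h1 h2
    rw [energy_succ]
    have e0 : (a - u (Fmap 1 (q 0)))^2 + (a - u (Fmap 2 (q 0)))^2
        + (u (Fmap 1 (q 0)) - u (Fmap 2 (q 0)))^2 ≤ Energy n (u ∘ Fmap 0) := by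
      apply (ih a (u (Fmap 1 (q 0))) (u (Fmap 2 (q 0)))).1
      · show u (Fmap 0 (q 0)) = a; rw [Fmap_q_self]; exact h0
      · show u (Fmap 0 (q 1)) = _; rw [glueL_eq]
      · show u (Fmap 0 (q 2)) = _; rw [glueR_eq]
    have e1 : (u (Fmap 1 (q 0)) - p)^2 + (u (Fmap 1 (q 0)) - u (Fmap 2 (q 1)))^2
        + (p - u (Fmap 2 (q 1)))^2 ≤ Energy n (u ∘ Fmap 1) := by
      apply (ih (u (Fmap 1 (q 0))) p (u (Fmap 2 (q 1)))).1
      · rfl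
      · show u (Fmap 1 (q 1)) = p; rw [Fmap_q_self]; exact h1
      · show u (Fmap 1 (q 2)) = _; rw [glueB_eq]
    have e2 : (u (Fmap 2 (q 0)) - u (Fmap 2 (q 1)))^2 + (u (Fmap 2 (q 0)) - r)^2
        + (u (Fmap 2 (q 1)) - r)^2 ≤ Energy n (u ∘ Fmap 2) := by
      apply (ih (u (Fmap 2 (q 0))) (u (Fmap 2 (q 1))) r).1
      · rfl
      · rfl
      · show u (Fmap 2 (q 2)) = r; rw [Fmap_q_self]; exact h2
    nlinarith [e0, e1, e2,
      sq_nonneg (u (Fmap 1 (q 0)) - (2*a+2*p+r)/5),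
      sq_nonneg (u (Fmap 2 (q 0)) - (2*a+2*r+p)/5),
      sq_nonneg (u (Fmap 2 (q 1)) - (a+2*p+2*r)/5),
      sq_nonneg ((u (Fmap 1 (q 0)) - (2*a+2*p+r)/5) - (u (Fmap 2 (q 0)) - (2*a+2*r+p)/5)),
      sq_nonneg ((u (Fmap 1 (q 0)) - (2*a+2*p+r)/5) - (u (Fmap 2 (q 1)) - (a+2*p+2*r)/5)),
      sq_nonneg ((u (Fmap 2 (q 0)) - (2*a+2*r+p)/5) - (u (Fmap 2 (q 1)) - (a+2*p+2*r)/5))]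
  · obtain ⟨uT, hT0, hT1, hT2, hTE⟩ := (ih a ((2*a+2*p+r)/5) ((2*a+2*r+p)/5)).2
    obtain ⟨uL, hL0, hL1, hL2, hLE⟩ := (ih ((2*a+2*p+r)/5) p ((a+2*p+2*r)/5)).2
    obtain ⟨uR, hR0, hR1, hR2, hRE⟩ := (ih ((2*a+2*r+p)/5) ((a+2*p+2*r)/5) r).2
    have hcL : uT (q 1) = uL (q 0) := by rw [hT1, hL0]
    have hcR : uT (q 2) = uR (q 0) := by rw [hT2, hR0]
    have hcB : uL (q 2) = uR (q 1) := by rw [hL2, hR1]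
    refine ⟨glue n uT uL uR, ?_, ?_, ?_, ?_⟩
    · have h := glue_F0 (uL := uL) (uR := uR) hcL hcR (q_mem_V 0 n)
      rw [Fmap_q_self] at h; rw [h, hT0]
    · have h := glue_F1 (uT := uT) (uL := uL) (uR := uR) (q_mem_V 1 n)
      rw [Fmap_q_self] at h; rw [h, hL1]
    · have h := glue_F2 (uT := uT) hcB (q_mem_V 2 n)
      rw [Fmap_q_self] at h; rw [h, hR2]
    · rw [energy_succ]
      have E0 : Energy n (glue n uT uL uR ∘ Fmap 0) = Energy n uT :=
        energy_congr fun y hy => glue_F0 hcL hcR hy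
      have E1 : Energy n (glue n uT uL uR ∘ Fmap 1) = Energy n uL :=
        energy_congr fun y hy => glue_F1 hy
      have E2 : Energy n (glue n uT uL uR ∘ Fmap 2) = Energy n uR :=
        energy_congr fun y hy => glue_F2 hcB hy
      rw [E0, E1, E2, hTE, hLE, hRE]
      ring

lemma ct_all (n : ℕ) : CTProp n := by
  induction n with
  | zero => exact ct_zero
  | succ n ih => exact ct_succ ih

-- ### the inductive step
def combine (n : ℕ) (bL bR : ℕ → ℝ) : ℕ → ℝ := fun j => if j ≤ 2^n then bL j else bR (j - 2^n)

def stepA (S a1 g1 a2 g2 : ℝ) : ℝ :=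
  5/3*(a1 + a2 - ((S+2)*(g1^2+g2^2)+2*g1*g2)/((S+1)*(S+3)))
def stepB (S g1 g2 : ℝ) : ℝ := 5/3*(g1+g2)/(S+1)
def stepS (S : ℝ) : ℝ := 10/3*S/(S+1)

theorem step {n : ℕ} {bL bR : ℕ → ℝ} {aL gL aR gR S : ℝ} (hS : 0 ≤ S)
    (hglue : bL (2^n) = bR 0)
    (hL : IsCharged n bL aL gL S) (hR : IsCharged n bR aR gR S) :
    IsCharged (n+1) (combine n bL bR) (stepA S aL gL aR gR) (stepB S gL gR) (stepS S) := by
  have hCT := ct_all n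
  have h1 : S + 1 ≠ 0 := by linarith
  have h3 : S + 3 ≠ 0 := by linarith
  have hpow : (2:ℕ)^n ≤ 2^(n+1) := Nat.pow_le_pow_right (by norm_num) (by omega)
  have hid : ∀ s : ℝ, stepA S aL gL aR gR - 2*(stepB S gL gR)*s + (stepS S)*s^2
      = 5/3*(aL + aR + 2*s^2
        - ((S+2)*((gL+s)^2+(gR+s)^2)+2*(gL+s)*(gR+s))/((S+1)*(S+3))) := by
    intro s
    unfold stepA stepB stepS
    field_simp
    ring
  constructor
  · rintro s u ⟨h0, hb⟩
    have admL : Adm n (u (Fmap 1 (q 0))) bL (u ∘ Fmap 1) := by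
      refine ⟨rfl, fun j hj => ?_⟩
      show u (Fmap 1 (xb n j)) = bL j
      rw [Fmap1_xb, hb j (le_trans hj hpow)]
      simp [combine, hj]
    have admR : Adm n (u (Fmap 2 (q 0))) bR (u ∘ Fmap 2) := by
      refine ⟨rfl, fun j hj => ?_⟩
      show u (Fmap 2 (xb n j)) = bR j
      rw [Fmap2_xb, hb (j + 2^n) (by omega)]
      by_cases hj0 : j = 0
      · subst hj0
        simp only [combine, zero_add, le_refl, if_pos]
        exact hglue
      · have hnle : ¬ (j + 2^n ≤ 2^n) := by omega
        simp [combine, hnle]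
    have e1 := hL.1 _ _ admL
    have e2 := hR.1 _ _ admR
    have e0 : (s - u (Fmap 1 (q 0)))^2 + (s - u (Fmap 2 (q 0)))^2
        + (u (Fmap 1 (q 0)) - u (Fmap 2 (q 0)))^2 ≤ Energy n (u ∘ Fmap 0) := by
      apply (hCT s (u (Fmap 1 (q 0))) (u (Fmap 2 (q 0)))).1
      · show u (Fmap 0 (q 0)) = s; rw [Fmap_q_self]; exact h0
      · show u (Fmap 0 (q 1)) = _; rw [glueL_eq]
      · show u (Fmap 0 (q 2)) = _; rw [glueR_eq]
    have hq := quad_lb S (gL + s) (gR + s) (u (Fmap 1 (q 0))) (u (Fmap 2 (q 0))) hS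
    have hneg : -((S+2)*((gL+s)^2+(gR+s)^2)+2*(gL+s)*(gR+s))/((S+1)*(S+3))
        = -(((S+2)*((gL+s)^2+(gR+s)^2)+2*(gL+s)*(gR+s))/((S+1)*(S+3))) := by ring
    have hsum : aL + aR + 2*s^2
        - ((S+2)*((gL+s)^2+(gR+s)^2)+2*(gL+s)*(gR+s))/((S+1)*(S+3))
        ≤ Energy n (u ∘ Fmap 0) + Energy n (u ∘ Fmap 1) + Energy n (u ∘ Fmap 2) := by
      linarith [e0, e1, e2, hq, hneg]
    rw [energy_succ, hid s]
    linarith [hsum]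
  · intro s
    obtain ⟨uL, admL, hEL⟩ := hL.2 (((S+2)*(gL+s)+(gR+s))/((S+1)*(S+3)))
    obtain ⟨uR, admR, hER⟩ := hR.2 (((S+2)*(gR+s)+(gL+s))/((S+1)*(S+3)))
    obtain ⟨uT, hT0, hT1, hT2, hTE⟩ :=
      (hCT s (((S+2)*(gL+s)+(gR+s))/((S+1)*(S+3))) (((S+2)*(gR+s)+(gL+s))/((S+1)*(S+3)))).2
    have hcL : uT (q 1) = uL (q 0) := by rw [hT1, admL.1]
    have hcR : uT (q 2) = uR (q 0) := by rw [hT2, admR.1]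
    have hcB : uL (q 2) = uR (q 1) := by
      have hu1 : uL (q 2) = bL (2^n) := by rw [← xb_top n]; exact admL.2 (2^n) le_rfl
      have hu2 : uR (q 1) = bR 0 := by rw [← xb_zero n]; exact admR.2 0 (Nat.zero_le _)
      rw [hu1, hu2, hglue]
    refine ⟨glue n uT uL uR, ⟨?_, ?_⟩, ?_⟩
    · have h := glue_F0 (uL := uL) (uR := uR) hcL hcR (q_mem_V 0 n)
      rw [Fmap_q_self] at h; rw [h, hT0]
    · intro j hj
      by_cases h : j ≤ 2^n
      · rw [← Fmap1_xb, glue_F1 (xb_mem_V n j h), admL.2 j h]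
        simp [combine, h]
      · have hj' : j - 2^n ≤ 2^n := by omega
        have hxbj : Fmap 2 (xb n (j - 2^n)) = xb (n+1) j := by
          rw [Fmap2_xb]; congr 1; omega
        rw [← hxbj, glue_F2 hcB (xb_mem_V n _ hj'), admR.2 _ hj']
        simp [combine, h]
    · rw [energy_succ]
      have E0 : Energy n (glue n uT uL uR ∘ Fmap 0) = Energy n uT :=
        energy_congr fun y hy => glue_F0 hcL hcR hy
      have E1 : Energy n (glue n uT uL uR ∘ Fmap 1) = Energy n uL :=
        energy_congr fun y hy => glue_F1 hy
      have E2 : Energy n (glue n uT uL uR ∘ Fmap 2) = Energy n uR :=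
        energy_congr fun y hy => glue_F2 hcB hy
      rw [E0, E1, E2, hTE, hEL, hER, hid s]
      field_simp
      ring

-- ### the sequences
def Sq (n : ℕ) : ℝ := 14*10^n/(6*10^n + 3^n)
def b1 (n : ℕ) : ℝ := 7*5^n/(6*10^n + 3^n)
def b2 (n : ℕ) : ℝ := 14*5^n/(6*10^n + 3^n)

lemma Sq_nonneg (n : ℕ) : 0 ≤ Sq n := by unfold Sq; positivity

lemma Sq_rec (n : ℕ) : stepS (Sq n) = Sq (n+1) := by
  have h1 : (0:ℝ) < 6*10^n+3^n := by positivity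
  have h2 : (0:ℝ) < 20*10^n+3^n := by positivity
  unfold stepS Sq
  rw [pow_succ, pow_succ]
  field_simp
  ring

lemma b1_recL (n : ℕ) : stepB (Sq n) (b1 n) 0 = b1 (n+1) := by
  have h1 : (0:ℝ) < 6*10^n+3^n := by positivity
  have h2 : (0:ℝ) < 20*10^n+3^n := by positivity
  unfold stepB Sq b1
  rw [pow_succ, pow_succ, pow_succ]
  field_simp
  ring

lemma b1_recR (n : ℕ) : stepB (Sq n) 0 (b1 n) = b1 (n+1) := by
  rw [← b1_recL n]; unfold stepB; ring

lemma b2_recL (n : ℕ) : stepB (Sq n) (b2 n) 0 = b2 (n+1) := by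
  have h1 : (0:ℝ) < 6*10^n+3^n := by positivity
  have h2 : (0:ℝ) < 20*10^n+3^n := by positivity
  unfold stepB Sq b2
  rw [pow_succ, pow_succ, pow_succ]
  field_simp
  ring

lemma b2_recR (n : ℕ) : stepB (Sq n) 0 (b2 n) = b2 (n+1) := by
  rw [← b2_recL n]; unfold stepB; ring

lemma b12_recL (n : ℕ) : stepB (Sq n) (b1 n + b2 n) 0 = b1 (n+1) + b2 (n+1) := by
  rw [← b1_recL n, ← b2_recL n]; unfold stepB; ring

lemma b12_recR (n : ℕ) : stepB (Sq n) 0 (b1 n + b2 n) = b1 (n+1) + b2 (n+1) := by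
  rw [← b12_recL n]; unfold stepB; ring

def aF : ℕ → ℝ
  | 0 => 2
  | n+1 => stepA (Sq n) (aF n) (b1 n) 0 0
def aL : ℕ → ℝ
  | 0 => 2
  | n+1 => stepA (Sq n) 0 0 (aL n) (b1 n)
def aG : ℕ → ℝ
  | 0 => 0
  | 1 => stepA 2 2 1 2 1
  | n+2 => stepA (Sq (n+1)) (aG (n+1)) (b2 (n+1)) 0 0
def aK : ℕ → ℝ
  | 0 => 0
  | 1 => stepA 2 2 1 2 1
  | n+2 => stepA (Sq (n+1)) 0 0 (aK (n+1)) (b2 (n+1))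
def aLK : ℕ → ℝ
  | 0 => 0
  | 1 => stepA 2 2 1 2 2
  | n+2 => stepA (Sq (n+1)) 0 0 (aLK (n+1)) (b1 (n+1) + b2 (n+1))
def aFG : ℕ → ℝ
  | 0 => 0
  | 1 => stepA 2 2 2 2 1
  | n+2 => stepA (Sq (n+1)) (aFG (n+1)) (b1 (n+1) + b2 (n+1)) 0 0

-- boundary data normal forms
def bO : ℕ → ℝ := fun _ => 0
def indb (k : ℕ) : ℕ → ℝ := fun j => if j = k then 1 else 0
def indb2 (k l : ℕ) : ℕ → ℝ := fun j => if j = k then 1 else if j = l then 1 else 0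
def dd (x y : ℝ) : ℕ → ℝ := fun j => if j = 0 then x else if j = 1 then y else 0

lemma xb01 : xb 0 1 = q 2 := by rw [show (1:ℕ) = 2^0 from rfl, xb_top]

lemma charged0' (x y : ℝ) : IsCharged 0 (dd x y) (x^2+y^2+(x-y)^2) (x+y) 2 := by
  have hn1 : q 1 ≠ q 0 := fun h => q_ne_01 h.symm
  have hn2 : q 2 ≠ q 0 := fun h => q_ne_02 h.symm
  have hn3 : q 2 ≠ q 1 := fun h => q_ne_12 h.symm
  constructor
  · rintro s u ⟨h0, hb⟩
    have hb0 := hb 0 (by norm_num)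
    have hb1 := hb 1 le_rfl
    rw [xb_zero] at hb0
    rw [xb01] at hb1
    norm_num [dd] at hb0
    norm_num [dd] at hb1
    rw [energy_zero, h0, hb0, hb1]
    apply le_of_eq; ring
  · intro s
    refine ⟨fun z => if z = q 0 then s else if z = q 1 then x else y, ⟨by simp, ?_⟩, ?_⟩
    · intro j hj
      interval_cases j
      · rw [xb_zero]; simp [dd, hn1]
      · rw [xb01]; norm_num [dd, hn2, hn3]
    · rw [energy_zero]
      simp only [if_pos rfl, hn1, hn2, hn3, if_neg, if_false]
      simp [hn1, hn2, hn3]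
      ring

lemma build {m : ℕ} {bLd bRd : ℕ → ℝ} {a1 g1 a2 g2 : ℝ} {b' : ℕ → ℝ} {α β S' : ℝ}
    (hglue : bLd (2^m) = bRd 0)
    (hL : IsCharged m bLd a1 g1 (Sq m)) (hR : IsCharged m bRd a2 g2 (Sq m))
    (hb : ∀ j ≤ 2^(m+1), combine m bLd bRd j = b' j)
    (hα : stepA (Sq m) a1 g1 a2 g2 = α) (hβ : stepB (Sq m) g1 g2 = β)
    (hS : stepS (Sq m) = S') :
    IsCharged (m+1) b' α β S' := by
  subst hα; subst hβ; subst hS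
  exact (step (Sq_nonneg m) hglue hL hR).congr hb

lemma charged0'' (x y : ℝ) : IsCharged 0 (dd x y) (x^2+y^2+(x-y)^2) (x+y) (Sq 0) := by
  have : Sq 0 = 2 := by norm_num [Sq]
  rw [this]; exact charged0' x y

-- the master induction
lemma Pn : ∀ n : ℕ, 1 ≤ n →
    IsCharged n bO 0 0 (Sq n) ∧
    IsCharged n (indb 0) (aF n) (b1 n) (Sq n) ∧
    IsCharged n (indb 1) (aG n) (b2 n) (Sq n) ∧
    IsCharged n (indb (2^n)) (aL n) (b1 n) (Sq n) ∧
    IsCharged n (indb (2^n - 1)) (aK n) (b2 n) (Sq n) ∧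
    IsCharged n (indb2 (2^n - 1) (2^n)) (aLK n) (b1 n + b2 n) (Sq n) ∧
    IsCharged n (indb2 0 1) (aFG n) (b1 n + b2 n) (Sq n) := by
  intro n
  induction n with
  | zero => omega
  | succ m ih =>
    intro _
    rcases Nat.eq_zero_or_pos m with rfl | hm
    · refine ⟨?_, ?_, ?_, ?_, ?_, ?_, ?_⟩
      · exact build (by norm_num [dd]) (charged0'' 0 0) (charged0'' 0 0)
          (fun j hj => by interval_cases j <;> norm_num [combine, dd, bO])
          (by norm_num [stepA]) (by norm_num [stepB]) (Sq_rec 0)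
      · exact build (by norm_num [dd]) (charged0'' 1 0) (charged0'' 0 0)
          (fun j hj => by interval_cases j <;> norm_num [combine, dd, indb])
          (by norm_num [aF, stepA, Sq, b1]) (by norm_num [stepB, Sq, b1]) (Sq_rec 0)
      · exact build (by norm_num [dd]) (charged0'' 0 1) (charged0'' 1 0)
          (fun j hj => by interval_cases j <;> norm_num [combine, dd, indb])
          (by norm_num [aG, stepA, Sq]) (by norm_num [stepB, Sq, b2]) (Sq_rec 0)
      · exact build (by norm_num [dd]) (charged0'' 0 0) (charged0'' 0 1)
          (fun j hj => by interval_cases j <;> norm_num [combine, dd, indb])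
          (by norm_num [aL, stepA, Sq, b1]) (by norm_num [stepB, Sq, b1]) (Sq_rec 0)
      · exact build (by norm_num [dd]) (charged0'' 0 1) (charged0'' 1 0)
          (fun j hj => by interval_cases j <;> norm_num [combine, dd, indb])
          (by norm_num [aK, stepA, Sq]) (by norm_num [stepB, Sq, b2]) (Sq_rec 0)
      · exact build (by norm_num [dd]) (charged0'' 0 1) (charged0'' 1 1)
          (fun j hj => by interval_cases j <;> norm_num [combine, dd, indb2])
          (by norm_num [aLK, stepA, Sq]) (by norm_num [stepB, Sq, b1, b2]) (Sq_rec 0)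
      · exact build (by norm_num [dd]) (charged0'' 1 1) (charged0'' 1 0)
          (fun j hj => by interval_cases j <;> norm_num [combine, dd, indb2])
          (by norm_num [aFG, stepA, Sq]) (by norm_num [stepB, Sq, b1, b2]) (Sq_rec 0)
    · obtain ⟨hO, hF, hG, hL, hK, hLK, hFG⟩ := ih hm
      obtain ⟨k, rfl⟩ : ∃ k, m = k + 1 := ⟨m - 1, by omega⟩
      set m := k + 1 with hmdef
      have hp : (2:ℕ)^(m+1) = 2^m + 2^m := by rw [pow_succ]; omega
      have h2m : 2 ≤ 2^m :=
        le_trans (by norm_num) (Nat.pow_le_pow_right (by norm_num) hm)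
      refine ⟨?_, ?_, ?_, ?_, ?_, ?_, ?_⟩
      · exact build rfl hO hO
          (fun j hj => by simp [combine, bO])
          (by norm_num [stepA]) (by norm_num [stepB]) (Sq_rec m)
      · refine build ?_ hF hO ?_ rfl (b1_recL m) (Sq_rec m)
        · simp only [indb, bO]; rw [if_neg (by omega)]
        · intro j hj
          rw [hp] at hj
          simp only [combine, indb, bO]
          split_ifs <;> first | rfl | (exfalso; omega)
      · refine build ?_ hG hO ?_ rfl (b2_recL m) (Sq_rec m)
        · simp only [indb, bO]; rw [if_neg (by omega)]
        · intro j hj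
          rw [hp] at hj
          simp only [combine, indb, bO]
          split_ifs <;> first | rfl | (exfalso; omega)
      · refine build ?_ hO hL ?_ rfl (b1_recR m) (Sq_rec m)
        · simp only [indb, bO]; rw [if_neg (by omega)]
        · intro j hj
          rw [hp] at hj
          simp only [combine, indb, bO, hp]
          split_ifs <;> first | rfl | (exfalso; omega)
      · refine build ?_ hO hK ?_ rfl (b2_recR m) (Sq_rec m)
        · simp only [indb, bO]; rw [if_neg (by omega)]
        · intro j hj
          rw [hp] at hj
          simp only [combine, indb, bO, hp]
          split_ifs <;> first | rfl | (exfalso; omega)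
      · refine build ?_ hO hLK ?_ rfl (b12_recR m) (Sq_rec m)
        · simp only [indb2, bO]; rw [if_neg (by omega), if_neg (by omega)]
        · intro j hj
          rw [hp] at hj
          simp only [combine, indb2, bO, hp]
          split_ifs <;> first | rfl | (exfalso; omega)
      · refine build ?_ hFG hO ?_ rfl (b12_recL m) (Sq_rec m)
        · simp only [indb2, bO]; rw [if_neg (by omega), if_neg (by omega)]
        · intro j hj
          rw [hp] at hj
          simp only [combine, indb2, bO, hp]
          split_ifs <;> first | rfl | (exfalso; omega)

-- ### relating cond to the sequences
lemma q0_ne_xb (n j : ℕ) : q 0 ≠ xb n j := by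
  rw [xb_def, q0_def]
  intro h
  have h2 := congrArg Prod.snd h
  simp only at h2
  exact absurd h2 (by positivity : (0:ℝ) < Real.sqrt 3/2).ne'

lemma ind_xb_q0 (n j : ℕ) : ind (xb n j) (q 0) = 0 := by
  rw [ind, if_neg (q0_ne_xb n j)]

lemma ind_xb_xb (n k j : ℕ) : ind (xb n k) (xb n j) = indb k j := by
  by_cases h : j = k
  · subst h; simp [ind, indb]
  · rw [ind, if_neg (fun hc => h (xb_inj hc)), indb, if_neg h]

lemma cond_formula {n j1 j2 : ℕ} {α1 α2 α12 β1 β2 β12 S : ℝ} (hne : j1 ≠ j2)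
    (h1 : IsCharged n (indb j1) α1 β1 S) (h2 : IsCharged n (indb j2) α2 β2 S)
    (h12 : IsCharged n (indb2 j1 j2) α12 β12 S) :
    cond n (Eplus n) (xb n j1) (xb n j2) = (α1 + α2 - α12)/2 := by
  have hv0 : (ind (xb n j1) + ind (xb n j2)) (q 0) = 0 := by
    rw [Pi.add_apply, ind_xb_q0, ind_xb_q0]; norm_num
  have hvb : ∀ j ≤ 2^n, (ind (xb n j1) + ind (xb n j2)) (xb n j) = indb2 j1 j2 j := by
    intro j _
    rw [Pi.add_apply, ind_xb_xb, ind_xb_xb]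
    unfold indb indb2
    by_cases hj1 : j = j1
    · subst hj1
      simp only [if_pos rfl]
      rw [if_neg (fun h : j = j2 => hne h)]
      norm_num
    · rw [if_neg hj1, if_neg hj1]
      by_cases hj2 : j = j2
      · subst hj2; simp
      · simp [hj1, hj2]
  unfold cond
  rw [Q_eq_of_charged h1 (ind_xb_q0 n j1) (fun j _ => ind_xb_xb n j1 j),
    Q_eq_of_charged h2 (ind_xb_q0 n j2) (fun j _ => ind_xb_xb n j2 j),
    Q_eq_of_charged h12 hv0 hvb]

-- ### the combination identities
lemma Acomb : ∀ n : ℕ, 1 ≤ n → aK n + aL n - aLK n = aF n + aG n - aFG n := by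
  intro n
  induction n with
  | zero => omega
  | succ m ih =>
    intro _
    rcases Nat.eq_zero_or_pos m with rfl | hm
    · norm_num [aK, aL, aLK, aF, aG, aFG, stepA, Sq, b1, b2]
    · have h := ih hm
      obtain ⟨k, rfl⟩ : ∃ k, m = k + 1 := ⟨m - 1, by omega⟩
      show stepA (Sq (k+1)) 0 0 (aK (k+1)) (b2 (k+1))
          + stepA (Sq (k+1)) 0 0 (aL (k+1)) (b1 (k+1))
          - stepA (Sq (k+1)) 0 0 (aLK (k+1)) (b1 (k+1) + b2 (k+1))
        = stepA (Sq (k+1)) (aF (k+1)) (b1 (k+1)) 0 0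
          + stepA (Sq (k+1)) (aG (k+1)) (b2 (k+1)) 0 0
          - stepA (Sq (k+1)) (aFG (k+1)) (b1 (k+1) + b2 (k+1)) 0 0
      unfold stepA
      linear_combination (5/3 : ℝ) * h

-- ### closed-form correction identity
lemma corr_eq (n : ℕ) :
    (stepA (Sq n) (aK n) (b2 n) 0 0 + stepA (Sq n) (aL n) (b1 n) (aF n) (b1 n)
      - stepA (Sq n) (aLK n) (b1 n + b2 n) (aF n) (b1 n))/2
    = 5/6*(aK n + aL n - aLK n)
      + 294*25^(n+1)/((3^(n+1)+6*10^(n+1))*(5*3^(n+1)+9*10^(n+1))) := by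
  have hx : (0:ℝ) < 3^n := by positivity
  have hw : (0:ℝ) < 10^n := by positivity
  have hy : (0:ℝ) < 5^n := by positivity
  have h1 : (0:ℝ) < 6*10^n+3^n := by positivity
  have h2 : (0:ℝ) < 20*10^n+3^n := by positivity
  have h25 : (25:ℝ)^(n+1) = 25*(5^n*5^n) := by
    rw [show (25:ℝ) = 5*5 by norm_num, mul_pow, pow_succ]; ring
  unfold stepA Sq b1 b2
  rw [h25]
  simp only [pow_succ]
  field_simp
  ring

-- ### the five mid-point charged instances at level m+1
lemma midC (m : ℕ) (hm : 1 ≤ m) :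
    IsCharged (m+1) (indb (2^m - 1))
      (stepA (Sq m) (aK m) (b2 m) 0 0) (stepB (Sq m) (b2 m) 0) (Sq (m+1)) ∧
    IsCharged (m+1) (indb (2^m))
      (stepA (Sq m) (aL m) (b1 m) (aF m) (b1 m)) (stepB (Sq m) (b1 m) (b1 m)) (Sq (m+1)) ∧
    IsCharged (m+1) (indb2 (2^m - 1) (2^m))
      (stepA (Sq m) (aLK m) (b1 m + b2 m) (aF m) (b1 m))
      (stepB (Sq m) (b1 m + b2 m) (b1 m)) (Sq (m+1)) ∧
    IsCharged (m+1) (indb (2^m + 1))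
      (stepA (Sq m) 0 0 (aG m) (b2 m)) (stepB (Sq m) 0 (b2 m)) (Sq (m+1)) ∧
    IsCharged (m+1) (indb2 (2^m) (2^m + 1))
      (stepA (Sq m) (aL m) (b1 m) (aFG m) (b1 m + b2 m))
      (stepB (Sq m) (b1 m) (b1 m + b2 m)) (Sq (m+1)) := by
  obtain ⟨hO, hF, hG, hL, hK, hLK, hFG⟩ := Pn m hm
  have hp : (2:ℕ)^(m+1) = 2^m + 2^m := by rw [pow_succ]; omega
  have h2m : 2 ≤ 2^m :=
    le_trans (by norm_num) (Nat.pow_le_pow_right (by norm_num) hm)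
  refine ⟨?_, ?_, ?_, ?_, ?_⟩
  · refine build ?_ hK hO ?_ rfl rfl (Sq_rec m)
    · have hne : (2:ℕ)^m ≠ 2^m - 1 := by omega
      simp [indb, bO, hne]
    · intro j hj
      rw [hp] at hj
      simp only [combine, indb, bO]
      split_ifs <;> first | rfl | (exfalso; omega)
  · refine build ?_ hL hF ?_ rfl rfl (Sq_rec m)
    · simp [indb]
    · intro j hj
      rw [hp] at hj
      simp only [combine, indb]
      split_ifs <;> first | rfl | (exfalso; omega)
  · refine build ?_ hLK hF ?_ rfl rfl (Sq_rec m)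
    · have hne : (2:ℕ)^m ≠ 2^m - 1 := by omega
      simp [indb2, indb, hne]
    · intro j hj
      rw [hp] at hj
      simp only [combine, indb2, indb]
      split_ifs <;> first | rfl | (exfalso; omega)
  · refine build ?_ hO hG ?_ rfl rfl (Sq_rec m)
    · simp [indb, bO]
    · intro j hj
      rw [hp] at hj
      simp only [combine, indb, bO]
      split_ifs <;> first | rfl | (exfalso; omega)
  · refine build ?_ hL hFG ?_ rfl rfl (Sq_rec m)
    · simp [indb, indb2]
    · intro j hj
      rw [hp] at hj
      simp only [combine, indb, indb2]
      split_ifs <;> first | rfl | (exfalso; omega)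


/-- With `m_n = c^n_{x_{2^{n−1}−1}, x_{2^{n−1}}}` and `l_n = c^n_{x₀,x₁}`
(conductances of `E_n⁺` at level `n`): `m_n = c^n_{x_{2^{n−1}}, x_{2^{n−1}+1}}`,
`m₁ = 20/9`, and the stated recurrence for `m_{n+1}`. -/
theorem stmt13 :
    (∀ n : ℕ, 1 ≤ n →
      cond n (Eplus n) (xb n (2 ^ (n - 1) - 1)) (xb n (2 ^ (n - 1))) =
        cond n (Eplus n) (xb n (2 ^ (n - 1))) (xb n (2 ^ (n - 1) + 1))) ∧
    cond 1 (Eplus 1) (xb 1 (2 ^ 0 - 1)) (xb 1 (2 ^ 0)) = 20 / 9 ∧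
    ∀ n : ℕ, 1 ≤ n →
      cond (n + 1) (Eplus (n + 1)) (xb (n + 1) (2 ^ n - 1)) (xb (n + 1) (2 ^ n)) =
        5 / 3 * cond n (Eplus n) (xb n 0) (xb n 1) +
          294 * 25 ^ (n + 1) /
            ((3 ^ (n + 1) + 6 * 10 ^ (n + 1)) * (5 * 3 ^ (n + 1) + 9 * 10 ^ (n + 1))) := by
  have conj2 : cond 1 (Eplus 1) (xb 1 (2 ^ 0 - 1)) (xb 1 (2 ^ 0)) = 20/9 := by
    obtain ⟨hO, hF, hG, hL, hK, hLK, hFG⟩ := Pn 1 le_rfl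
    have e1 := cond_formula (n:=1) (j1:=0) (j2:=1) (by omega) hF hG hFG
    have hpos : (2:ℕ)^0 - 1 = 0 := by norm_num
    have hpos2 : (2:ℕ)^0 = 1 := by norm_num
    rw [hpos, hpos2, e1]
    norm_num [aF, aG, aFG, stepA, Sq, b1, b2]
  refine ⟨?_, conj2, ?_⟩
  · intro n hn
    obtain ⟨m, rfl⟩ : ∃ m, n = m + 1 := ⟨n - 1, by omega⟩
    simp only [Nat.add_sub_cancel]
    rcases Nat.eq_zero_or_pos m with rfl | hm
    · obtain ⟨hO, hF, hG, hL, hK, hLK, hFG⟩ := Pn 1 le_rfl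
      have hK' : IsCharged 1 (indb 1) (aK 1) (b2 1) (Sq 1) := by
        have : (2:ℕ)^1 - 1 = 1 := by norm_num
        rwa [this] at hK
      have hL' : IsCharged 1 (indb 2) (aL 1) (b1 1) (Sq 1) := by
        have : (2:ℕ)^1 = 2 := by norm_num
        rwa [this] at hL
      have hLK' : IsCharged 1 (indb2 1 2) (aLK 1) (b1 1 + b2 1) (Sq 1) := by
        have h1 : (2:ℕ)^1 - 1 = 1 := by norm_num
        have h2 : (2:ℕ)^1 = 2 := by norm_num
        rwa [h1, h2] at hLK
      have e1 := cond_formula (n:=1) (j1:=0) (j2:=1) (by omega) hF hG hFG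
      have e2 := cond_formula (n:=1) (j1:=1) (j2:=2) (by omega) hK' hL' hLK'
      have hpos : (2:ℕ)^0 - 1 = 0 := by norm_num
      have hpos2 : (2:ℕ)^0 = 1 := by norm_num
      rw [hpos, hpos2]
      norm_num only []
      rw [e1, e2]
      linear_combination (-1/2 : ℝ) * Acomb 1 le_rfl
    · obtain ⟨c1, c2, c3, c4, c5⟩ := midC m hm
      have h2m : 2 ≤ 2^m :=
        le_trans (by norm_num) (Nat.pow_le_pow_right (by norm_num) hm)
      have e1 := cond_formula (n:=m+1) (j1:=2^m-1) (j2:=2^m) (by omega) c1 c2 c3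
      have e2 := cond_formula (n:=m+1) (j1:=2^m) (j2:=2^m+1) (by omega) c2 c4 c5
      rw [e1, e2]
      have h := Acomb m hm
      unfold stepA
      linear_combination (5/6 : ℝ) * h
  · intro n hn
    obtain ⟨c1, c2, c3, c4, c5⟩ := midC n hn
    obtain ⟨hO, hF, hG, hL, hK, hLK, hFG⟩ := Pn n hn
    have h2m : 2 ≤ 2^n :=
      le_trans (by norm_num) (Nat.pow_le_pow_right (by norm_num) hn)
    have e1 := cond_formula (n:=n+1) (j1:=2^n-1) (j2:=2^n) (by omega) c1 c2 c3
    have e2 := cond_formula (n:=n) (j1:=0) (j2:=1) (by omega) hF hG hFG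
    rw [e1, e2, corr_eq n, Acomb n hn]
    ring

end SGPaper
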